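/- If Z is gamma distributed with shape α > 0 and rate λ > 0, and φ : (0,∞) → ℝ is continuously differentiable with (λz - α)φ(z) and z·φ'(z) integrable against the gamma density, then E[(λZ - α)·φ(Z)] = E[Z·φ'(Z)]. -/

import Mathlib

open scoped ENNReal NNReal
open MeasureTheory ProbabilityTheory Real Set Filter Topology

/-- **Stein's identity for the gamma distribution.** If `Z ~ Gamma(α, λ)` with shape `α > 0`
and rate `λ > 0`, and `φ` is continuously differentiable on `(0,∞)` with `(λz - α)φ(z)` and
`z·φ'(z)` integrable against the gamma density, then `E[(λZ - α)·φ(Z)] = E[Z·φ'(Z)]`. -/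
theorem gamma_stein_identity (α lam : ℝ) (hα : 0 < α) (hlam : 0 < lam)
    (φ : ℝ → ℝ) (hφ : ∀ x ∈ Set.Ioi (0 : ℝ), DifferentiableAt ℝ φ x)
    (hφ' : ContinuousOn (deriv φ) (Set.Ioi 0))
    (hint1 : Integrable (fun z => (lam * z - α) * φ z) (gammaMeasure α lam))
    (hint2 : Integrable (fun z => z * deriv φ z) (gammaMeasure α lam)) :
    ∫ z, (lam * z - α) * φ z ∂(gammaMeasure α lam)
      = ∫ z, z * deriv φ z ∂(gammaMeasure α lam) := by
  set c : ℝ := lam ^ α / Real.Gamma α with hcdef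
  have hc_pos : 0 < c := div_pos (rpow_pos_of_pos hlam α) (Real.Gamma_pos_of_pos hα)
  set p : ℝ → ℝ := fun x => x ^ (α - 1) * Real.exp (-(lam * x)) with hpdef
  set g : ℝ → ℝ := fun x => x ^ α * Real.exp (-(lam * x)) * φ x with hgdef
  set h : ℝ → ℝ := fun x => p x * ((α - lam * x) * φ x + x * deriv φ x) with hhdef
  have hpdf_meas : Measurable fun x => (gammaPDFReal α lam x).toNNReal :=
    (measurable_gammaPDFReal α lam).real_toNNReal
  have hμ : gammaMeasure α lam
      = volume.withDensity (fun x => ((gammaPDFReal α lam x).toNNReal : ℝ≥0∞)) := rfl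
  -- conversion of integrals
  have hconv : ∀ f : ℝ → ℝ, ∫ z, f z ∂(gammaMeasure α lam)
      = ∫ x in Ioi 0, gammaPDFReal α lam x * f x := by
    intro f
    rw [hμ, integral_withDensity_eq_integral_smul hpdf_meas]
    have heq : ∀ x, (gammaPDFReal α lam x).toNNReal • f x = gammaPDFReal α lam x * f x := by
      intro x
      rw [NNReal.smul_def, Real.coe_toNNReal _ (gammaPDFReal_nonneg hα hlam x), smul_eq_mul]
    simp_rw [heq]
    rw [← integral_Ici_eq_integral_Ioi,
      setIntegral_eq_integral_of_forall_compl_eq_zero]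
    intro x hx
    simp only [mem_Ici, not_le] at hx
    simp [gammaPDFReal, not_le.mpr hx]
  have hconvInt : ∀ f : ℝ → ℝ, Integrable f (gammaMeasure α lam) →
      IntegrableOn (fun x => gammaPDFReal α lam x * f x) (Ioi 0) := by
    intro f hf
    rw [hμ, integrable_withDensity_iff_integrable_smul hpdf_meas] at hf
    have hIf := hf.integrableOn (s := Ioi 0)
    refine IntegrableOn.congr_fun hIf (fun x _ => ?_) measurableSet_Ioi
    rw [NNReal.smul_def, Real.coe_toNNReal _ (gammaPDFReal_nonneg hα hlam x), smul_eq_mul]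
  have hpdf_eq : ∀ x ∈ Ioi (0:ℝ), gammaPDFReal α lam x = c * p x := by
    intro x hx
    simp only [gammaPDFReal, if_pos (le_of_lt (mem_Ioi.mp hx)), hpdef, hcdef]
    ring
  -- integrability on (0, ∞)
  have hI1 : IntegrableOn (fun x => p x * ((lam * x - α) * φ x)) (Ioi 0) := by
    have h0 := (hconvInt _ hint1).const_mul c⁻¹
    refine IntegrableOn.congr_fun h0 (fun x hx => ?_) measurableSet_Ioi
    rw [hpdf_eq x hx]
    field_simp
  have hI2 : IntegrableOn (fun x => p x * (x * deriv φ x)) (Ioi 0) := by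
    have h0 := (hconvInt _ hint2).const_mul c⁻¹
    refine IntegrableOn.congr_fun h0 (fun x hx => ?_) measurableSet_Ioi
    rw [hpdf_eq x hx]
    field_simp
  have hInt : IntegrableOn h (Ioi 0) := by
    have h0 := hI2.sub hI1
    refine IntegrableOn.congr_fun h0 (fun x _ => ?_) measurableSet_Ioi
    simp only [hhdef, Pi.sub_apply]
    ring
  -- derivative of g
  have hrpow : ∀ x : ℝ, 0 < x → x ^ (α - 1) * x = x ^ α := by
    intro x hx0
    rw [Real.rpow_sub_one hx0.ne' α]
    field_simp
  have hgd : ∀ x ∈ Ioi (0:ℝ), HasDerivAt g (h x) x := by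
    intro x hx
    have hx0 : (0:ℝ) < x := hx
    have h1 : HasDerivAt (fun y : ℝ => y ^ α) (α * x ^ (α - 1)) x :=
      Real.hasDerivAt_rpow_const (Or.inl hx0.ne')
    have h2 : HasDerivAt (fun y : ℝ => Real.exp (-(lam * y)))
        (Real.exp (-(lam * x)) * -(lam * 1)) x := by
      exact (((hasDerivAt_id x).const_mul lam).neg).exp
    have h3 : HasDerivAt φ (deriv φ x) x := (hφ x hx).hasDerivAt
    have h4 := (h1.mul h2).mul h3
    refine h4.congr_deriv ?_
    simp only [hhdef, hgdef, hpdef, Pi.mul_apply]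
    rw [← hrpow x hx0]
    ring
  -- fundamental theorem of calculus on [a, b] ⊆ (0, ∞)
  have hFTC : ∀ a b : ℝ, 0 < a → a ≤ b → ∫ t in a..b, h t = g b - g a := by
    intro a b ha hab
    refine intervalIntegral.integral_eq_sub_of_hasDerivAt (fun t ht => ?_) ?_
    · rw [uIcc_of_le hab] at ht
      exact hgd t (lt_of_lt_of_le ha ht.1)
    · rw [intervalIntegrable_iff_integrableOn_Ioc_of_le hab]
      exact hInt.mono_set (fun t ht => lt_trans ha ht.1)
  -- limit of g at +∞
  have hLtop : Tendsto g atTop (𝓝 (g 1 + ∫ t in Ioi 1, h t)) := by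
    have h1 : Tendsto (fun x => g 1 + ∫ t in (1:ℝ)..x, h t) atTop
        (𝓝 (g 1 + ∫ t in Ioi 1, h t)) :=
      tendsto_const_nhds.add (intervalIntegral_tendsto_integral_Ioi 1
        (hInt.mono_set (fun t ht => mem_Ioi.mpr (lt_trans one_pos ht))) tendsto_id)
    refine Tendsto.congr' ?_ h1
    filter_upwards [eventually_ge_atTop (1:ℝ)] with x hx
    rw [hFTC 1 x one_pos hx]
    ring
  -- limit of g at 0⁺
  have hIcc : IntegrableOn h (Icc 0 1) := by
    rw [integrableOn_Icc_iff_integrableOn_Ioc]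
    exact hInt.mono_set (fun t ht => ht.1)
  have hL0 : Tendsto g (𝓝[>] 0) (𝓝 (g 1 - ∫ t in Ioc 0 1, h t)) := by
    have hcontP : ContinuousOn (fun x => ∫ t in x..(1:ℝ), h t) (Icc 0 1) := by
      have hI : IntegrableOn h (uIcc (0:ℝ) 1) := by rwa [uIcc_of_le zero_le_one]
      have := intervalIntegral.continuousOn_primitive_interval_left (a := 0) (b := 1) hI
      rwa [uIcc_of_le zero_le_one] at this
    have hc0 : ContinuousWithinAt (fun x => ∫ t in x..(1:ℝ), h t) (Icc 0 1) 0 :=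
      hcontP 0 (by norm_num)
    have htendP : Tendsto (fun x => ∫ t in x..(1:ℝ), h t) (𝓝[>] 0)
        (𝓝 (∫ t in (0:ℝ)..1, h t)) := by
      have heq : 𝓝[>] (0:ℝ) = 𝓝[Ioc (0:ℝ) 1] 0 :=
        (nhdsWithin_Ioc_eq_nhdsGT one_pos).symm
      rw [heq]
      exact hc0.tendsto.mono_left (nhdsWithin_mono 0 Ioc_subset_Icc_self)
    have h1 : Tendsto (fun x => g 1 - ∫ t in x..(1:ℝ), h t) (𝓝[>] 0)
        (𝓝 (g 1 - ∫ t in Ioc 0 1, h t)) := by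
      rw [← intervalIntegral.integral_of_le zero_le_one]
      exact tendsto_const_nhds.sub htendP
    refine Tendsto.congr' ?_ h1
    filter_upwards [Ioo_mem_nhdsGT_of_mem
      (⟨le_refl (0:ℝ), zero_lt_one⟩ : (0:ℝ) ∈ Ico (0:ℝ) 1)] with x hx
    rw [hFTC x 1 hx.1 hx.2.le]
    ring
  -- relation between the integrand of hint1 and g
  have hgp : ∀ x : ℝ, 0 < x → p x * ((lam * x - α) * φ x) = (lam - α / x) * g x := by
    intro x hx0
    simp only [hpdef, hgdef]
    rw [← hrpow x hx0]
    field_simp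
  -- the limit at +∞ is zero
  have hLtop0 : g 1 + ∫ t in Ioi 1, h t = 0 := by
    by_contra hL
    set L : ℝ := g 1 + ∫ t in Ioi 1, h t with hLdef
    have htend : Tendsto (fun x => (lam - α / x) * g x) atTop (𝓝 (lam * L)) := by
      have h1 : Tendsto (fun x : ℝ => lam - α / x) atTop (𝓝 (lam - 0)) :=
        tendsto_const_nhds.sub (tendsto_const_nhds.div_atTop tendsto_id)
      simpa using h1.mul hLtop
    have hne : lam * L ≠ 0 := mul_ne_zero hlam.ne' hL
    have hev : ∀ᶠ x in atTop, |lam * L| / 2 ≤ |(lam - α / x) * g x| :=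
      htend.abs.eventually (eventually_ge_nhds (half_lt_self (abs_pos.mpr hne)))
    obtain ⟨M, hM⟩ := eventually_atTop.1 (hev.and (eventually_ge_atTop (1:ℝ)))
    have hM1 : (1:ℝ) ≤ M ⊔ 1 := le_max_right _ _
    have hsub : Ici (M ⊔ 1) ⊆ Ioi (0:ℝ) := fun t ht =>
      lt_of_lt_of_le one_pos (le_trans hM1 ht)
    have hconst : Integrable (fun _ : ℝ => |lam * L| / 2)
        (volume.restrict (Ici (M ⊔ 1))) := by
      refine Integrable.mono (hI1.mono_set hsub) aestronglyMeasurable_const ?_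
      rw [ae_restrict_iff' measurableSet_Ici]
      refine ae_of_all _ (fun x hx => ?_)
      have hx0 : 0 < x := hsub hx
      have hbd := (hM x (le_trans (le_max_left _ _) hx)).1
      rw [Real.norm_eq_abs, Real.norm_eq_abs, abs_of_nonneg (by positivity), hgp x hx0]
      exact hbd
    rw [integrable_const_iff] at hconst
    rcases hconst with h0 | hfin
    · have : |lam * L| = 0 := by linarith
      exact hne (abs_eq_zero.mp this)
    · rw [isFiniteMeasure_restrict, Real.volume_Ici] at hfin
      exact absurd hfin (by simp)
  -- the limit at 0⁺ is zero
  have hL00 : g 1 - ∫ t in Ioc 0 1, h t = 0 := by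
    by_contra hL
    set L : ℝ := g 1 - ∫ t in Ioc 0 1, h t with hLdef
    have htend : Tendsto (fun x => (lam * x - α) * g x) (𝓝[>] 0) (𝓝 ((lam * 0 - α) * L)) := by
      have h1 : Tendsto (fun x : ℝ => lam * x - α) (𝓝[>] 0) (𝓝 (lam * 0 - α)) :=
        (((continuous_const.mul continuous_id).sub continuous_const).tendsto 0).mono_left
          nhdsWithin_le_nhds
      exact h1.mul hL0
    have hne : (lam * 0 - α) * L ≠ 0 := by
      refine mul_ne_zero ?_ hL
      simp only [mul_zero, zero_sub]
      exact neg_ne_zero.mpr hα.ne'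
    have hev : ∀ᶠ x in 𝓝[>] (0:ℝ),
        |(lam * 0 - α) * L| / 2 ≤ |(lam * x - α) * g x| :=
      htend.abs.eventually (eventually_ge_nhds (half_lt_self (abs_pos.mpr hne)))
    obtain ⟨u, hu, husub⟩ := mem_nhdsGT_iff_exists_Ioo_subset.mp hev
    have hupos : (0:ℝ) < u := hu
    set k : ℝ := |(lam * 0 - α) * L| / 2 with hkdef
    have hk_pos : 0 < k := by
      rw [hkdef]
      exact half_pos (abs_pos.mpr hne)
    have hmono : IntegrableOn (fun x : ℝ => k * x⁻¹) (Ioo 0 u) := by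
      refine Integrable.mono (hI1.mono_set Ioo_subset_Ioi_self) ?_ ?_
      · exact (measurable_const.mul measurable_inv).aestronglyMeasurable
      · rw [ae_restrict_iff' measurableSet_Ioo]
        refine ae_of_all _ (fun x hx => ?_)
        have hx0 : 0 < x := hx.1
        have hbd := husub hx
        rw [Real.norm_eq_abs, Real.norm_eq_abs, abs_of_nonneg (by positivity),
          hgp x hx0]
        have heq2 : (lam - α / x) * g x = ((lam * x - α) * g x) * x⁻¹ := by
          field_simp
        rw [heq2, abs_mul, abs_of_nonneg (inv_nonneg.mpr hx0.le)]
        exact mul_le_mul_of_nonneg_right hbd (inv_nonneg.mpr hx0.le)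
    have hinv : IntegrableOn (fun x : ℝ => x⁻¹) (Ioo 0 u) := by
      have h2 := hmono.const_mul k⁻¹
      refine IntegrableOn.congr_fun h2 (fun x _ => ?_) measurableSet_Ioo
      field_simp
    have hiff := intervalIntegral.integrableOn_Ioo_rpow_iff (s := (-1:ℝ)) hupos
    simp only [Real.rpow_neg_one] at hiff
    have := hiff.mp hinv
    norm_num at this
  -- the integral of h over (0, ∞) vanishes
  have hsum : ∫ t in Ioi 0, h t = 0 := by
    have hun : Ioc (0:ℝ) 1 ∪ Ioi 1 = Ioi 0 := Ioc_union_Ioi_eq_Ioi zero_le_one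
    rw [← hun, setIntegral_union (Ioc_disjoint_Ioi le_rfl) measurableSet_Ioi
      (hInt.mono_set (fun t ht => ht.1)) (hInt.mono_set (fun t ht => mem_Ioi.mpr (lt_trans one_pos ht)))]
    have e1 : ∫ t in Ioc 0 1, h t = g 1 := by linarith
    have e2 : ∫ t in Ioi 1, h t = -g 1 := by linarith
    rw [e1, e2]
    ring
  -- conclusion
  rw [hconv (fun z => (lam * z - α) * φ z), hconv (fun z => z * deriv φ z)]
  have hdiff : (∫ x in Ioi 0, gammaPDFReal α lam x * (x * deriv φ x))
      - ∫ x in Ioi 0, gammaPDFReal α lam x * ((lam * x - α) * φ x)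
      = ∫ x in Ioi 0, c * h x := by
    rw [← integral_sub (hconvInt _ hint2) (hconvInt _ hint1)]
    refine setIntegral_congr_fun measurableSet_Ioi (fun x hx => ?_)
    rw [hpdf_eq x hx]
    simp only [hhdef]
    ring
  have hzero : ∫ x in Ioi 0, c * h x = 0 := by
    rw [integral_const_mul, hsum, mul_zero]
  rw [hzero] at hdiff
  linarith
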